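/- Let y : [0,∞) → ℝ be nonnegative and differentiable with y'(t) ≤ c·y(t)·(1+y(t)²), and suppose ∫₀^∞ y(s) ds ≤ K for some K ≥ 0. If c·K + arctan(y(0)) < π/2, then sup_{t ≥ 0} y(t) ≤ tan(c·K + arctan(y(0))) < ∞. -/

import Mathlib

open Real MeasureTheory

theorem global_bound_negligible_force (c K : ℝ) (hc : 0 ≤ c) (hK : 0 ≤ K)
    (y y' : ℝ → ℝ)
    (hderiv : ∀ t ∈ Set.Ici (0:ℝ), HasDerivAt y (y' t) t)
    (hnonneg : ∀ t ∈ Set.Ici (0:ℝ), 0 ≤ y t)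
    (hineq : ∀ t ∈ Set.Ici (0:ℝ), y' t ≤ c * y t * (1 + (y t) ^ 2))
    (hint : IntegrableOn y (Set.Ioi (0:ℝ)))
    (hintK : (∫ s in Set.Ioi (0:ℝ), y s) ≤ K)
    (hsmall : c * K + Real.arctan (y 0) < Real.pi / 2) :
    ∀ t ∈ Set.Ici (0:ℝ), y t ≤ Real.tan (c * K + Real.arctan (y 0)) := by
  intro t ht
  simp only [Set.mem_Ici] at ht
  have hcont : ∀ s : ℝ, 0 ≤ s → ContinuousAt y s := fun s hs => (hderiv s hs).continuousAt
  have hcontOn : ContinuousOn y (Set.Ioi (0:ℝ)) :=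
    fun s hs => (hcont s (le_of_lt hs)).continuousWithinAt
  set F : ℝ → ℝ := fun x => ∫ s in (0:ℝ)..x, y s with hFdef
  have hIntOn : ∀ x : ℝ, IntegrableOn y (Set.Ioc 0 x) :=
    fun x => hint.mono_set Set.Ioc_subset_Ioi_self
  have hInt : ∀ x : ℝ, 0 ≤ x → IntervalIntegrable y volume 0 x := by
    intro x hx
    rw [intervalIntegrable_iff_integrableOn_Ioc_of_le hx]
    exact hIntOn x
  set g : ℝ → ℝ := fun x => Real.arctan (y x) - c * F x with hgdef
  have hgderiv : ∀ x : ℝ, 0 < x →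
      HasDerivAt g (1 / (1 + y x ^ 2) * y' x - c * y x) x := by
    intro x hx
    have hF : HasDerivAt F (y x) x :=
      intervalIntegral.integral_hasDerivAt_right (hInt x hx.le)
        (hcontOn.stronglyMeasurableAtFilter isOpen_Ioi x hx)
        (hcont x hx.le)
    exact ((hderiv x hx.le).arctan).sub ((hF.const_mul c))
  have hanti : AntitoneOn g (Set.Icc 0 t) := by
    apply antitoneOn_of_deriv_nonpos (convex_Icc 0 t)
    · apply ContinuousOn.sub
      · exact Real.continuous_arctan.comp_continuousOn
          (fun s hs => (hcont s hs.1).continuousWithinAt)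
      · apply continuousOn_const.mul
        have := intervalIntegral.continuousOn_primitive_interval'
          (hInt t ht) (Set.left_mem_uIcc (a := (0:ℝ)) (b := t))
        rwa [Set.uIcc_of_le ht] at this
    · intro x hx
      rw [interior_Icc] at hx
      exact (hgderiv x hx.1).differentiableAt.differentiableWithinAt
    · intro x hx
      rw [interior_Icc] at hx
      rw [(hgderiv x hx.1).deriv]
      have hpos : (0:ℝ) < 1 + y x ^ 2 := by positivity
      have h1 : 1 / (1 + y x ^ 2) * y' x ≤ c * y x := by
        rw [one_div, inv_mul_le_iff₀ hpos]
        calc y' x ≤ c * y x * (1 + y x ^ 2) := hineq x hx.1.le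
            _ = (1 + y x ^ 2) * (c * y x) := by ring
      linarith
  have hg0 : g t ≤ g 0 := hanti ⟨le_rfl, ht⟩ ⟨ht, le_rfl⟩ ht
  have hF0 : F 0 = 0 := intervalIntegral.integral_same
  have hFt : F t ≤ K := by
    have h1 : F t = ∫ s in Set.Ioc 0 t, y s := intervalIntegral.integral_of_le ht
    have h2 : (∫ s in Set.Ioc 0 t, y s) ≤ ∫ s in Set.Ioi (0:ℝ), y s := by
      apply setIntegral_mono_set hint
      · filter_upwards [ae_restrict_mem measurableSet_Ioi] with s hs
        exact hnonneg s (Set.mem_Ici.mpr (le_of_lt (Set.mem_Ioi.mp hs)))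
      · exact HasSubset.Subset.eventuallyLE Set.Ioc_subset_Ioi_self
    linarith
  have harc : Real.arctan (y t) ≤ c * K + Real.arctan (y 0) := by
    have : Real.arctan (y t) - c * F t ≤ Real.arctan (y 0) - c * F 0 := hg0
    have hcF : c * F t ≤ c * K := mul_le_mul_of_nonneg_left hFt hc
    rw [hF0] at this
    linarith
  have hb_mem : c * K + Real.arctan (y 0) ∈ Set.Ioo (-(Real.pi/2)) (Real.pi/2) := by
    constructor
    · have h0 : 0 ≤ Real.arctan (y 0) := by
        have h : Real.arctan 0 ≤ Real.arctan (y 0) :=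
          Real.arctan_strictMono.monotone (hnonneg 0 Set.self_mem_Ici)
        simpa [Real.arctan_zero] using h
      have : (0:ℝ) < Real.pi / 2 := by positivity
      nlinarith [mul_nonneg hc hK]
    · exact hsmall
  have := (Real.strictMonoOn_tan.monotoneOn) (Real.arctan_mem_Ioo (y t))
    hb_mem harc
  rwa [Real.tan_arctan] at this
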